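/- arXiv:2107.11695 — 3 statements merged into one kernel-verified Lean document; each statement's English description precedes it below -/
import Mathlib

section
/- Let V be a finite set and C a finite set of 3-element subsets of V. Let p0 be a 2-element subset of V contained in at least one member of C, and suppose that every 2-element subset q ≠ p0 that is contained in some triple t ∈ C with p0 ⊆ t has the property that every triple of C containing q also contains p0. Then for every cover S of C there exists a cover S' of C with p0 ∈ S' and |S'| ≤ |S|; in particular some minimum-cardinality cover contains p0. -/
/-- Let `V` be a finite set and `C` a finite set of 3-element subsets of `V`.
A *cover* of `C` is a finset `S` of 2-element subsets of `V` such that every `t ∈ C` contains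
some `q ∈ S`.  Let `p0` be a 2-element subset contained in at least one member of `C`, and
suppose every 2-element subset `q ≠ p0` contained in some triple `t ∈ C` with `p0 ⊆ t` has the
property that every triple of `C` containing `q` also contains `p0`.  Then for every cover `S`
there is a cover `S'` with `p0 ∈ S'` and `|S'| ≤ |S|`; in particular some minimum-cardinality
cover contains `p0`. -/
theorem stmt_1 {V : Type*} [DecidableEq V]
    (C : Finset (Finset V)) (hC : ∀ t ∈ C, t.card = 3)
    (p0 : Finset V) (hp0 : p0.card = 2)
    (hmem : ∃ t ∈ C, p0 ⊆ t)
    (hprop : ∀ t ∈ C, p0 ⊆ t → ∀ q ⊆ t, q.card = 2 → q ≠ p0 →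
      ∀ s ∈ C, q ⊆ s → p0 ⊆ s) :
    (∀ S : Finset (Finset V),
      (∀ q ∈ S, q.card = 2) → (∀ t ∈ C, ∃ q ∈ S, q ⊆ t) →
      ∃ S' : Finset (Finset V),
        (∀ q ∈ S', q.card = 2) ∧ (∀ t ∈ C, ∃ q ∈ S', q ⊆ t) ∧
        p0 ∈ S' ∧ S'.card ≤ S.card) ∧
    (∃ S : Finset (Finset V),
      (∀ q ∈ S, q.card = 2) ∧ (∀ t ∈ C, ∃ q ∈ S, q ⊆ t) ∧ p0 ∈ S ∧
      ∀ S' : Finset (Finset V),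
        (∀ q ∈ S', q.card = 2) → (∀ t ∈ C, ∃ q ∈ S', q ⊆ t) →
        S.card ≤ S'.card) := by
  classical
  have key : ∀ S : Finset (Finset V),
      (∀ q ∈ S, q.card = 2) → (∀ t ∈ C, ∃ q ∈ S, q ⊆ t) →
      ∃ S' : Finset (Finset V),
        (∀ q ∈ S', q.card = 2) ∧ (∀ t ∈ C, ∃ q ∈ S', q ⊆ t) ∧
        p0 ∈ S' ∧ S'.card ≤ S.card := by
    intro S hS2 hScov
    obtain ⟨t0, ht0, hp0t0⟩ := hmem
    obtain ⟨q0, hq0S, hq0t0⟩ := hScov t0 ht0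
    by_cases hq : q0 = p0
    · exact ⟨S, hS2, hScov, hq ▸ hq0S, le_refl _⟩
    · refine ⟨insert p0 (S.erase q0), ?_, ?_, Finset.mem_insert_self _ _, ?_⟩
      · intro q hq'
        rcases Finset.mem_insert.mp hq' with h | h
        · exact h ▸ hp0
        · exact hS2 q (Finset.mem_of_mem_erase h)
      · intro t ht
        obtain ⟨q, hqS, hqt⟩ := hScov t ht
        by_cases hqq : q = q0
        · exact ⟨p0, Finset.mem_insert_self _ _,
            hprop t0 ht0 hp0t0 q0 hq0t0 (hS2 q0 hq0S) hq t ht (hqq ▸ hqt)⟩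
        · exact ⟨q, Finset.mem_insert_of_mem (Finset.mem_erase.mpr ⟨hqq, hqS⟩), hqt⟩
      · have h1 := Finset.card_insert_le p0 (S.erase q0)
        have h2 := Finset.card_erase_of_mem hq0S
        have hpos : 0 < S.card := Finset.card_pos.mpr ⟨q0, hq0S⟩
        omega
  refine ⟨key, ?_⟩
  have hex : ∃ S : Finset (Finset V),
      (∀ q ∈ S, q.card = 2) ∧ (∀ t ∈ C, ∃ q ∈ S, q ⊆ t) := by
    choose f hf1 hf2 using fun (t : Finset V) (h : t ∈ C) =>
      Finset.exists_subset_card_eq (s := t) (n := 2) (by rw [hC t h]; norm_num)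
    refine ⟨C.attach.image (fun t => f t.1 t.2), ?_, ?_⟩
    · intro q hq
      obtain ⟨t, _, rfl⟩ := Finset.mem_image.mp hq
      exact hf2 t.1 t.2
    · intro t ht
      exact ⟨f t ht, Finset.mem_image.mpr ⟨⟨t, ht⟩, Finset.mem_attach _ _, rfl⟩, hf1 t ht⟩
  have hP : ∃ n : ℕ, ∃ S : Finset (Finset V),
      (∀ q ∈ S, q.card = 2) ∧ (∀ t ∈ C, ∃ q ∈ S, q ⊆ t) ∧ S.card = n := by
    obtain ⟨S, h1, h2⟩ := hex
    exact ⟨S.card, S, h1, h2, rfl⟩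
  obtain ⟨S, hS1, hS2, hS3⟩ := Nat.find_spec hP
  obtain ⟨S', h1', h2', h3', h4'⟩ := key S hS1 hS2
  refine ⟨S', h1', h2', h3', ?_⟩
  intro S'' h1'' h2''
  have hmin : Nat.find hP ≤ S''.card := Nat.find_min' hP ⟨S'', h1'', h2'', rfl⟩
  omega
end

section
/- Let n ≥ 1, let h : {0,1}^n × {0,1} → ℝ, let i ≠ j be indices in {1,…,n}, and let M be a real number with M > 0 and M > (max h − min h), where max and min are taken over the finite domain {0,1}^n × {0,1}. Then the maximum over all (x,y) ∈ {0,1}^n × {0,1} of h(x,y) − M·p(x_i, x_j, y) equals the maximum over all x ∈ {0,1}^n of h(x, x_i·x_j). -/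
/-- The Rosenberg penalty `p(a,b,y) = a·b − 2·a·y − 2·b·y + 3·y` on real arguments. -/
noncomputable def rosP (a b y : ℝ) : ℝ := a * b - 2 * a * y - 2 * b * y + 3 * y

lemma rosP_mul (a b : Fin 2) :
    rosP ((a : ℕ) : ℝ) ((b : ℕ) : ℝ) (((a * b : Fin 2) : ℕ) : ℝ) = 0 := by
  fin_cases a <;> fin_cases b <;> norm_num [rosP]

lemma rosP_ge_one (a b y : Fin 2) (hy : y ≠ a * b) :
    1 ≤ rosP ((a : ℕ) : ℝ) ((b : ℕ) : ℝ) ((y : ℕ) : ℝ) := by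
  fin_cases a <;> fin_cases b <;> fin_cases y <;> simp_all <;> norm_num [rosP]

/-- Let `n ≥ 1`, `h : {0,1}^n × {0,1} → ℝ`, `i ≠ j` indices, and `M` a real
with `M > 0` and `M > max h − min h` (over the finite domain).  Then the maximum over
`(x,y) ∈ {0,1}^n × {0,1}` of `h(x,y) − M·p(x_i, x_j, y)` equals the maximum over
`x ∈ {0,1}^n` of `h(x, x_i·x_j)`. -/
theorem stmt_7 (n : ℕ) (hn : 1 ≤ n)
    (h : ((Fin n → Fin 2) × Fin 2) → ℝ)
    (i j : Fin n) (hij : i ≠ j)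
    (M : ℝ) (hM0 : 0 < M)
    (hM : (⨆ z : (Fin n → Fin 2) × Fin 2, h z) - (⨅ z : (Fin n → Fin 2) × Fin 2, h z) < M) :
    (⨆ z : (Fin n → Fin 2) × Fin 2,
        (h z - M * rosP ((z.1 i : ℕ) : ℝ) ((z.1 j : ℕ) : ℝ) ((z.2 : ℕ) : ℝ))) =
    ⨆ x : Fin n → Fin 2, h (x, x i * x j) := by
  have hba : ∀ {α : Type} [Fintype α] (f : α → ℝ), BddAbove (Set.range f) :=
    fun f => (Set.finite_range f).bddAbove
  have hbb : ∀ {α : Type} [Fintype α] (f : α → ℝ), BddBelow (Set.range f) :=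
    fun f => (Set.finite_range f).bddBelow
  apply le_antisymm
  · apply ciSup_le
    intro z
    by_cases hz : z.2 = z.1 i * z.1 j
    · have : rosP ((z.1 i : ℕ) : ℝ) ((z.1 j : ℕ) : ℝ) ((z.2 : ℕ) : ℝ) = 0 := by
        rw [hz]; exact rosP_mul _ _
      rw [this, mul_zero, sub_zero]
      have : h z = h (z.1, z.1 i * z.1 j) := by
        rw [← hz]
      rw [this]
      exact le_ciSup (hba (fun x => h (x, x i * x j))) z.1
    · have hp := rosP_ge_one (z.1 i) (z.1 j) z.2 hz
      have h1 : h z - M * rosP ((z.1 i : ℕ) : ℝ) ((z.1 j : ℕ) : ℝ) ((z.2 : ℕ) : ℝ)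
          ≤ h z - M := by
        have : M * 1 ≤ M * rosP ((z.1 i : ℕ) : ℝ) ((z.1 j : ℕ) : ℝ) ((z.2 : ℕ) : ℝ) :=
          mul_le_mul_of_nonneg_left hp hM0.le
        linarith
      have h2 : h z ≤ ⨆ z : (Fin n → Fin 2) × Fin 2, h z := le_ciSup (hba _) z
      have h3 : (⨅ z : (Fin n → Fin 2) × Fin 2, h z) ≤ h (z.1, z.1 i * z.1 j) :=
        ciInf_le (hbb _) _
      have h4 : h (z.1, z.1 i * z.1 j) ≤ ⨆ x : Fin n → Fin 2, h (x, x i * x j) :=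
        le_ciSup (hba (fun x => h (x, x i * x j))) z.1
      linarith
  · apply ciSup_le
    intro x
    have hp := rosP_mul (x i) (x j)
    calc h (x, x i * x j)
        = h (x, x i * x j) - M * rosP ((x i : ℕ) : ℝ) ((x j : ℕ) : ℝ)
            (((x i * x j : Fin 2) : ℕ) : ℝ) := by rw [hp, mul_zero, sub_zero]
      _ ≤ _ := le_ciSup (hba (fun z : (Fin n → Fin 2) × Fin 2 => h z - M * rosP ((z.1 i : ℕ) : ℝ) ((z.1 j : ℕ) : ℝ) ((z.2 : ℕ) : ℝ))) (x, x i * x j)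
end

section
/- With the numerator N and denominator D defined as below, for every l ∈ L and each choice of sign there exists an assignment (x,y) ∈ {0,1}^n × {0,1}^L with D(x,y) = 1 and N(x,y) = Σ_{k∈K_l} a_{l,k} (respectively N(x,y) = − Σ_{k∈K_l} a_{l,k}). Consequently, the supremum of N(x,y)/D(x,y) over all assignments with D(x,y) ≠ 0 is at least max_{l∈L} max( Σ_{k∈K_l} a_{l,k}, − Σ_{k∈K_l} a_{l,k} ). -/
/-- Let `n ≥ 1` and `L` a finite nonempty set of substituted pairs
`{i_l, j_l}` (distinct indices, pairwise-distinct pairs), each with a set `K_l` of third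
indices disjoint from `{i_l, j_l}` and coefficients `a_{l,k}`.  With the numerator
`N(x,y) = Σ_l Σ_{k∈K_l} a_{l,k}·(x_{i_l} x_{j_l} x_k − y_l x_k)` and denominator
`D(x,y) = Σ_l p(x_{i_l}, x_{j_l}, y_l)`, for every `l` and each choice of sign there is an
assignment with `D = 1` and `N = Σ_{k∈K_l} a_{l,k}` (resp. `N = −Σ_{k∈K_l} a_{l,k}`);
consequently `sup { N/D : D ≠ 0 } ≥ max_l max(Σ_{k∈K_l} a_{l,k}, −Σ_{k∈K_l} a_{l,k})`. -/
theorem stmt_15 (n : ℕ) (hn : 1 ≤ n)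
    {L : Type*} [Fintype L] [Nonempty L]
    (i j : L → Fin n) (hij : ∀ l : L, i l ≠ j l)
    (hdist : ∀ l l' : L, l ≠ l' → ({i l, j l} : Finset (Fin n)) ≠ {i l', j l'})
    (K : L → Finset (Fin n)) (hK : ∀ l : L, i l ∉ K l ∧ j l ∉ K l)
    (a : L → Fin n → ℝ)
    (N : (Fin n → Fin 2) → (L → Fin 2) → ℝ)
    (hN : ∀ x y, N x y = ∑ l : L, ∑ k ∈ K l,
      a l k * (((x (i l) : ℕ) : ℝ) * ((x (j l) : ℕ) : ℝ) * ((x k : ℕ) : ℝ) -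
        ((y l : ℕ) : ℝ) * ((x k : ℕ) : ℝ)))
    (D : (Fin n → Fin 2) → (L → Fin 2) → ℝ)
    (hD : ∀ x y, D x y = ∑ l : L,
      rosP ((x (i l) : ℕ) : ℝ) ((x (j l) : ℕ) : ℝ) ((y l : ℕ) : ℝ)) :
    (∀ l : L,
      (∃ x y, D x y = 1 ∧ N x y = ∑ k ∈ K l, a l k) ∧
      (∃ x y, D x y = 1 ∧ N x y = -∑ k ∈ K l, a l k)) ∧
    sSup {r : ℝ | ∃ x y, D x y ≠ 0 ∧ r = N x y / D x y} ≥
      Finset.univ.sup' Finset.univ_nonempty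
        (fun l : L => max (∑ k ∈ K l, a l k) (-∑ k ∈ K l, a l k)) := by
  classical
  have key : ∀ l : L,
      (∃ x y, D x y = 1 ∧ N x y = ∑ k ∈ K l, a l k) ∧
      (∃ x y, D x y = 1 ∧ N x y = -∑ k ∈ K l, a l k) := by
    intro l
    constructor
    · refine ⟨fun _ => 1, fun l' => if l' = l then 0 else 1, ?_, ?_⟩
      · rw [hD, Finset.sum_eq_single l]
        · norm_num [rosP]
        · intro l' _ hl'
          norm_num [rosP, hl']
        · simp
      · rw [hN, Finset.sum_eq_single l]
        · simp
        · intro l' _ hl'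
          simp [hl']
        · simp
    · refine ⟨fun m => if m = i l then 0 else 1,
        fun l' => if l' = l then 1 else if i l = i l' ∨ i l = j l' then 0 else 1, ?_, ?_⟩
      · rw [hD, Finset.sum_eq_single l]
        · have h1 : j l ≠ i l := (hij l).symm
          norm_num [rosP, h1]
        · intro l' _ hl'
          by_cases h1 : i l = i l'
          · by_cases h2 : i l = j l'
            · norm_num [rosP, hl', h1, h2]
            · norm_num [rosP, hl', h1, (Ne.symm h2)]
          · by_cases h2 : i l = j l'
            · norm_num [rosP, hl', h1, h2, (Ne.symm h1)]
            · norm_num [rosP, hl', h1, h2, (Ne.symm h1), (Ne.symm h2)]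
        · simp
      · rw [hN, Finset.sum_eq_single l]
        · have h1 : j l ≠ i l := (hij l).symm
          rw [← Finset.sum_neg_distrib]
          apply Finset.sum_congr rfl
          intro k hk
          have hk1 : k ≠ i l := fun h => (hK l).1 (h ▸ hk)
          norm_num [h1, hk1]
        · intro l' _ hl'
          apply Finset.sum_eq_zero
          intro k hk
          by_cases h1 : i l = i l'
          · norm_num [hl', h1, (hij l').symm]
          · by_cases h2 : i l = j l'
            · norm_num [hl', h1, h2, (Ne.symm h1)]
            · by_cases h3 : k = i l
              · norm_num [hl', h1, h2, (Ne.symm h1), (Ne.symm h2), h3]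
              · norm_num [hl', h1, h2, (Ne.symm h1), (Ne.symm h2), h3]
        · simp
  refine ⟨key, ?_⟩
  have hbdd : BddAbove {r : ℝ | ∃ x y, D x y ≠ 0 ∧ r = N x y / D x y} := by
    have hsub : {r : ℝ | ∃ x y, D x y ≠ 0 ∧ r = N x y / D x y} ⊆
        Set.range (fun p : (Fin n → Fin 2) × (L → Fin 2) => N p.1 p.2 / D p.1 p.2) := by
      rintro r ⟨x, y, _, rfl⟩
      exact ⟨(x, y), rfl⟩
    exact ((Set.finite_range _).subset hsub).bddAbove
  apply Finset.sup'_le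
  intro l _
  apply max_le
  · obtain ⟨x, y, hD1, hN1⟩ := (key l).1
    refine le_csSup hbdd ⟨x, y, by rw [hD1]; norm_num, by rw [hD1, hN1]; simp⟩
  · obtain ⟨x, y, hD1, hN1⟩ := (key l).2
    refine le_csSup hbdd ⟨x, y, by rw [hD1]; norm_num, by rw [hD1, hN1]; simp⟩
end
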